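/- Let k be a commutative ring and G a finite group with |G| a unit of k. Then for every ℕ-graded commutative k-algebra A with an action of G by degree-preserving k-algebra automorphisms one has β(A^G) ≤ β_k(G)·β(A). -/

import Mathlib

/-- `beta`: see above. -/
noncomputable def beta {A : Type*} [CommRing A] (𝒜 : ℕ → Set A) (B : Subring A) : ℕ∞ :=
  sInf ((↑) '' {n : ℕ | B ≤ Subring.closure {a : A | a ∈ B ∧ ∃ d ≤ n, a ∈ 𝒜 d}})

/-- An `ℕ`-graded commutative `k`-algebra equipped with an action of `G` by
degree-preserving `k`-algebra automorphisms. -/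
structure GradedAlgebraWithAction (k : Type) [CommRing k] (G : Type) [Group G] :
    Type 1 where
  carrier : Type
  [commRing : CommRing carrier]
  [algebra : Algebra k carrier]
  grading : ℕ → Submodule k carrier
  graded : GradedAlgebra grading
  action : G →* (carrier ≃ₐ[k] carrier)
  degPres : ∀ (g : G) (d : ℕ), ∀ a ∈ grading d, action g a ∈ grading d

attribute [instance] GradedAlgebraWithAction.commRing GradedAlgebraWithAction.algebra

namespace GradedAlgebraWithAction

variable {k G : Type} [CommRing k] [Group G] (X : GradedAlgebraWithAction k G)

/-- The invariant subring `A^G`. -/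
def inv : Subring X.carrier where
  carrier := {a : X.carrier | ∀ g : G, X.action g a = a}
  mul_mem' := by intro a b ha hb g; rw [map_mul, ha g, hb g]
  one_mem' := fun g => map_one (X.action g)
  add_mem' := by intro a b ha hb g; rw [map_add, ha g, hb g]
  zero_mem' := fun g => map_zero (X.action g)
  neg_mem' := by intro a ha g; rw [map_neg, ha g]

/-- The invariant subring fixed by a subgroup `H ≤ G`. -/
def invSub (H : Subgroup G) : Subring X.carrier where
  carrier := {a : X.carrier | ∀ g ∈ H, X.action g a = a}
  mul_mem' := by intro a b ha hb g hg; rw [map_mul, ha g hg, hb g hg]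
  one_mem' := fun g _ => map_one (X.action g)
  add_mem' := by intro a b ha hb g hg; rw [map_add, ha g hg, hb g hg]
  zero_mem' := fun g _ => map_zero (X.action g)
  neg_mem' := by intro a ha g hg; rw [map_neg, ha g hg]

/-- `β(A)` of the underlying graded algebra. -/
noncomputable def betaTop : ℕ∞ := beta (fun d => (X.grading d : Set X.carrier)) ⊤

/-- `β(A^G)` for the induced grading on the invariant ring. -/
noncomputable def betaInv : ℕ∞ := beta (fun d => (X.grading d : Set X.carrier)) X.inv

end GradedAlgebraWithAction

/-- `β_k(G)`: the supremum of `β(A^G)` over all `ℕ`-graded commutative `k`-algebras `A`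
with an action of `G` by degree-preserving `k`-algebra automorphisms and `β(A) ≤ 1`. -/
noncomputable def betaRing (k : Type) [CommRing k] (G : Type) [Group G] : ℕ∞ :=
  ⨆ (X : GradedAlgebraWithAction k G) (_ : X.betaTop ≤ 1), X.betaInv

/-! ### Auxiliary lemmas about `beta` -/

section AuxBeta

variable {A : Type*} [CommRing A]

lemma beta_le_of_le {𝒜 : ℕ → Set A} {B : Subring A} {s : ℕ}
    (h : B ≤ Subring.closure {a : A | a ∈ B ∧ ∃ d ≤ s, a ∈ 𝒜 d}) : beta 𝒜 B ≤ (s : ℕ∞) :=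
  sInf_le ⟨s, h, rfl⟩

lemma le_closure_of_beta_le {𝒜 : ℕ → Set A} {B : Subring A} {s : ℕ}
    (h : beta 𝒜 B ≤ (s : ℕ∞)) :
    B ≤ Subring.closure {a : A | a ∈ B ∧ ∃ d ≤ s, a ∈ 𝒜 d} := by
  by_contra hs
  have key : ((s + 1 : ℕ) : ℕ∞) ≤ beta 𝒜 B := by
    apply le_sInf
    rintro x ⟨m, hm, rfl⟩
    by_contra hlt
    push_neg at hlt
    have hms : m ≤ s := by
      have : (m : ℕ∞) < ((s + 1 : ℕ) : ℕ∞) := hlt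
      exact Nat.lt_succ_iff.mp (by exact_mod_cast this)
    exact hs (le_trans hm (Subring.closure_mono
      (fun a ⟨h1, d, hd, h2⟩ => ⟨h1, d, hd.trans hms, h2⟩)))
  have hcon : ((s + 1 : ℕ) : ℕ∞) ≤ (s : ℕ∞) := key.trans h
  have : s + 1 ≤ s := by exact_mod_cast hcon
  omega

end AuxBeta

/-! ### Auxiliary lemmas about graded algebras with action -/

attribute [instance] GradedAlgebraWithAction.graded

namespace GradedAlgebraWithAction

variable {k G : Type} [CommRing k] [Group G] (X : GradedAlgebraWithAction k G)

lemma mem_inv_iff (a : X.carrier) : a ∈ X.inv ↔ ∀ g : G, X.action g a = a := Iff.rfl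

lemma action_decompose (g : G) (a : X.carrier) (d : ℕ) :
    (DirectSum.decompose X.grading (X.action g a) d : X.carrier)
      = X.action g (DirectSum.decompose X.grading a d : X.carrier) := by
  induction a using DirectSum.Decomposition.inductionOn X.grading with
  | zero => simp
  | @homogeneous i m =>
    by_cases h : i = d
    · subst h
      rw [DirectSum.decompose_of_mem_same X.grading m.2,
        DirectSum.decompose_of_mem_same X.grading (X.degPres g i m m.2)]
    · rw [DirectSum.decompose_of_mem_ne X.grading m.2 h,
        DirectSum.decompose_of_mem_ne X.grading (X.degPres g i m m.2) h, map_zero]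
  | add x y hx hy =>
    rw [map_add, DirectSum.decompose_add, DirectSum.add_apply, Submodule.coe_add,
      DirectSum.decompose_add, DirectSum.add_apply, Submodule.coe_add, map_add, hx, hy]

/-- The set of homogeneous elements of degree at most `c`. -/
def degLE (c : ℕ) : Set X.carrier := {a | ∃ d ≤ c, a ∈ X.grading d}

lemma degLE_mono {c c' : ℕ} (h : c ≤ c') : X.degLE c ⊆ X.degLE c' :=
  fun _ ⟨d, hd, hx⟩ => ⟨d, hd.trans h, hx⟩

lemma one_mem_degLE (c : ℕ) : (1 : X.carrier) ∈ X.degLE c := by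
  letI := X.graded
  exact ⟨0, Nat.zero_le _, SetLike.one_mem_graded _⟩

lemma mul_mem_span_degLE {c c' : ℕ} {x y : X.carrier}
    (hx : x ∈ Submodule.span k (X.degLE c)) (hy : y ∈ Submodule.span k (X.degLE c')) :
    x * y ∈ Submodule.span k (X.degLE (c + c')) := by
  letI := X.graded
  induction hx using Submodule.span_induction with
  | mem x hxm =>
    induction hy using Submodule.span_induction with
    | mem y hym =>
      obtain ⟨d, hd, hxd⟩ := hxm
      obtain ⟨e, he, hye⟩ := hym
      exact Submodule.subset_span ⟨d + e, add_le_add hd he, SetLike.mul_mem_graded hxd hye⟩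
    | zero => simp
    | add y z _ _ h1 h2 => rw [mul_add]; exact Submodule.add_mem _ h1 h2
    | smul a y _ h1 => rw [mul_smul_comm]; exact Submodule.smul_mem _ _ h1
  | zero => simp
  | add x z _ _ h1 h2 => rw [add_mul]; exact Submodule.add_mem _ h1 h2
  | smul a x _ h1 => rw [smul_mul_assoc]; exact Submodule.smul_mem _ _ h1

lemma pow_mem_span_degLE {n : ℕ} {x : X.carrier} (hx : x ∈ X.degLE n) (m : ℕ) :
    x ^ m ∈ Submodule.span k (X.degLE (n * m)) := by
  induction m with
  | zero => simpa using Submodule.subset_span (X.one_mem_degLE 0)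
  | succ m ih =>
    rw [pow_succ, Nat.mul_succ]
    exact X.mul_mem_span_degLE ih (Submodule.subset_span hx)

lemma decompose_eq_zero_of_mem_span {c d : ℕ} (hd : c < d) {x : X.carrier}
    (hx : x ∈ Submodule.span k (X.degLE c)) :
    (DirectSum.decompose X.grading x d : X.carrier) = 0 := by
  induction hx using Submodule.span_induction with
  | mem x hxm =>
    obtain ⟨e, he, hxe⟩ := hxm
    exact DirectSum.decompose_of_mem_ne X.grading hxe (lt_of_le_of_lt he hd).ne
  | zero => simp
  | add x y _ _ h1 h2 =>
    rw [DirectSum.decompose_add, DirectSum.add_apply, Submodule.coe_add, h1, h2, add_zero]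
  | smul a x _ h1 =>
    rw [DirectSum.decompose_smul, DirectSum.smul_apply, Submodule.coe_smul, h1, smul_zero]

lemma aeval_homog_mem {n : ℕ} {ι : Type} (v : ι → X.carrier) (hv : ∀ i, v i ∈ X.degLE n)
    {p : MvPolynomial ι k} {e : ℕ} (hp : p.IsHomogeneous e) :
    MvPolynomial.aeval v p ∈ Submodule.span k (X.degLE (n * e)) := by
  classical
  have prod_mem : ∀ (u : ι →₀ ℕ) (t : Finset ι),
      (∏ i ∈ t, v i ^ u i) ∈ Submodule.span k (X.degLE (n * ∑ i ∈ t, u i)) := by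
    intro u t
    induction t using Finset.cons_induction with
    | empty => simpa using Submodule.subset_span (X.one_mem_degLE 0)
    | cons i t hi ih =>
      rw [Finset.prod_cons, Finset.sum_cons, Nat.mul_add]
      exact X.mul_mem_span_degLE (X.pow_mem_span_degLE (hv i) (u i)) ih
  rw [p.as_sum, map_sum]
  apply Submodule.sum_mem
  intro u hu
  have hdeg : u.degree = e := by
    have := hp (MvPolynomial.mem_support_iff.mp hu)
    rwa [Finsupp.degree_eq_weight_one]
  rw [MvPolynomial.aeval_monomial, ← Algebra.smul_def]
  apply Submodule.smul_mem
  have := prod_mem u u.support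
  have hsum : (∑ i ∈ u.support, u i) = e := hdeg
  rw [hsum] at this
  exact this

end GradedAlgebraWithAction

/-! ### Generation in degree ≤ 1 for polynomial rings -/

section MvPoly

variable {k : Type} [CommRing k]

lemma mvpoly_top_le_closure (σ : Type) :
    (⊤ : Subring (MvPolynomial σ k)) ≤ Subring.closure
      {p : MvPolynomial σ k | p ∈ (⊤ : Subring (MvPolynomial σ k)) ∧
        ∃ d ≤ 1, p ∈ (MvPolynomial.homogeneousSubmodule σ k d : Set (MvPolynomial σ k))} := by
  intro p hp0
  clear hp0
  induction p using MvPolynomial.induction_on with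
  | C a =>
    exact Subring.subset_closure ⟨Subring.mem_top _, 0, Nat.zero_le _,
      (MvPolynomial.mem_homogeneousSubmodule _ _).2 (MvPolynomial.isHomogeneous_C _ _)⟩
  | add p q hp hq => exact Subring.add_mem _ hp hq
  | mul_X p i hp =>
    exact Subring.mul_mem _ hp (Subring.subset_closure ⟨Subring.mem_top _, 1, le_refl _,
      (MvPolynomial.mem_homogeneousSubmodule _ _).2 (MvPolynomial.isHomogeneous_X _ _)⟩)

lemma homog_zero_eq_C {σ : Type} {p : MvPolynomial σ k} (hp : p.IsHomogeneous 0) :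
    p = MvPolynomial.C (MvPolynomial.coeff 0 p) := by
  classical
  ext u
  rcases eq_or_ne u 0 with rfl | h
  · simp
  · rw [hp.coeff_eq_zero (by simpa [Finsupp.degree_eq_zero_iff] using h),
      MvPolynomial.coeff_C, if_neg (Ne.symm h)]

end MvPoly

/-! ### The main construction -/

namespace BetaAux

open MvPolynomial

variable {k G : Type} [CommRing k] [Group G] (X : GradedAlgebraWithAction k G) (n : ℕ)

lemma action_comp (g h : G) (a : X.carrier) :
    X.action g (X.action h a) = X.action (g * h) a := by
  rw [map_mul, AlgEquiv.mul_apply]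

/-- Index set: homogeneous elements of degree at most `n`. -/
def Idx : Type := {q : ℕ × X.carrier // q.1 ≤ n ∧ q.2 ∈ X.grading q.1}

/-- `G` permutes the index set. -/
def permIdx (g : G) : Idx X n ≃ Idx X n where
  toFun x := ⟨(x.1.1, X.action g x.1.2), x.2.1, X.degPres g _ _ x.2.2⟩
  invFun x := ⟨(x.1.1, X.action g⁻¹ x.1.2), x.2.1, X.degPres g⁻¹ _ _ x.2.2⟩
  left_inv := by
    rintro ⟨⟨d, a⟩, h⟩
    apply Subtype.ext
    simp only
    rw [action_comp, inv_mul_cancel, map_one, AlgEquiv.one_apply]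
  right_inv := by
    rintro ⟨⟨d, a⟩, h⟩
    apply Subtype.ext
    simp only
    rw [action_comp, mul_inv_cancel, map_one, AlgEquiv.one_apply]

/-- The action of `G` on the polynomial ring. -/
noncomputable def theAction : G →* (MvPolynomial (Idx X n) k ≃ₐ[k] MvPolynomial (Idx X n) k) where
  toFun g := MvPolynomial.renameEquiv k (permIdx X n g)
  map_one' := by
    have h1 : permIdx X n 1 = Equiv.refl (Idx X n) := by
      apply Equiv.ext
      rintro ⟨⟨d, a⟩, h⟩
      apply Subtype.ext
      show (d, X.action 1 a) = (d, a)
      rw [map_one, AlgEquiv.one_apply]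
    show renameEquiv k (permIdx X n 1) = 1
    rw [h1, renameEquiv_refl]
    rfl
  map_mul' g h := by
    have h1 : permIdx X n (g * h) = (permIdx X n h).trans (permIdx X n g) := by
      apply Equiv.ext
      rintro ⟨⟨d, a⟩, hm⟩
      apply Subtype.ext
      show (d, X.action (g * h) a) = (d, X.action g (X.action h a))
      rw [action_comp]
    show renameEquiv k (permIdx X n (g * h))
      = (renameEquiv k (permIdx X n h)).trans (renameEquiv k (permIdx X n g))
    rw [renameEquiv_trans, h1]

/-- The auxiliary graded algebra with `G`-action. -/
noncomputable def Y : GradedAlgebraWithAction k G where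
  carrier := MvPolynomial (Idx X n) k
  grading d := MvPolynomial.homogeneousSubmodule (Idx X n) k d
  graded := MvPolynomial.gradedAlgebra
  action := theAction X n
  degPres g d p hp := by
    rw [MvPolynomial.mem_homogeneousSubmodule] at hp ⊢
    show ((renameEquiv k (permIdx X n g)) p).IsHomogeneous d
    rw [renameEquiv_apply]
    exact hp.rename_isHomogeneous

/-- The evaluation map to `X.carrier`. -/
noncomputable def phi : MvPolynomial (Idx X n) k →ₐ[k] X.carrier :=
  MvPolynomial.aeval (fun x : Idx X n => x.1.2)

lemma phi_equivariant (g : G) (p : MvPolynomial (Idx X n) k) :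
    phi X n (theAction X n g p) = X.action g (phi X n p) := by
  have h : (phi X n).comp (theAction X n g).toAlgHom
      = (X.action g).toAlgHom.comp (phi X n) := by
    apply MvPolynomial.algHom_ext
    intro i
    show phi X n ((renameEquiv k (permIdx X n g)) (MvPolynomial.X i))
      = X.action g (phi X n (MvPolynomial.X i))
    rw [renameEquiv_apply, rename_X]
    simp only [phi, aeval_X]
    rfl
  exact DFunLike.congr_fun h p

lemma phi_surj
    (hA : (⊤ : Subring X.carrier) ≤ Subring.closure
      {a : X.carrier | a ∈ (⊤ : Subring X.carrier) ∧
        ∃ d ≤ n, a ∈ (X.grading d : Set X.carrier)})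
    (a : X.carrier) : ∃ p, phi X n p = a := by
  have : a ∈ (phi X n).toRingHom.range := by
    refine Subring.closure_le.mpr ?_ (hA (Subring.mem_top a))
    rintro b ⟨-, d, hd, hb⟩
    exact ⟨MvPolynomial.X ⟨(d, b), hd, hb⟩, by
      show MvPolynomial.aeval (fun x : Idx X n => x.1.2) (MvPolynomial.X _) = b
      exact MvPolynomial.aeval_X _ _⟩
  obtain ⟨p, hp⟩ := this
  exact ⟨p, hp⟩

lemma Y_betaTop : (Y X n).betaTop ≤ 1 := by
  exact (beta_le_of_le (mvpoly_top_le_closure (k := k) (Idx X n))).trans_eq Nat.cast_one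

/-- The key reduction lemma. -/
lemma key (hunit : IsUnit ((Nat.card G : k))) [Finite G] {s : ℕ}
    (hA : (⊤ : Subring X.carrier) ≤ Subring.closure
      {a : X.carrier | a ∈ (⊤ : Subring X.carrier) ∧
        ∃ d ≤ n, a ∈ (X.grading d : Set X.carrier)})
    (hY : (Y X n).betaInv ≤ (s : ℕ∞)) :
    X.inv ≤ Subring.closure {a : X.carrier | a ∈ X.inv ∧
      ∃ d ≤ s * n, a ∈ (X.grading d : Set X.carrier)} := by
  classical
  cases nonempty_fintype G
  intro a ha
  have ha' : ∀ g : G, X.action g a = a := ha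
  obtain ⟨p, hp⟩ := phi_surj X n hA a
  set u := hunit.unit with hu
  set q : MvPolynomial (Idx X n) k := (↑u⁻¹ : k) • ∑ g : G, theAction X n g p with hq
  have hqinv : q ∈ (Y X n).inv := by
    intro h
    show theAction X n h q = q
    rw [hq, map_smul, map_sum]
    congr 1
    rw [← Equiv.sum_comp (Equiv.mulLeft h) (fun g => theAction X n g p)]
    apply Finset.sum_congr rfl
    intro g _
    show theAction X n h (theAction X n g p) = theAction X n (h * g) p
    rw [← AlgEquiv.mul_apply, ← map_mul]
  have hphiq : phi X n q = a := by
    rw [hq, map_smul, map_sum]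
    have heq : ∀ g : G, g ∈ Finset.univ → phi X n (theAction X n g p) = a := fun g _ => by
      rw [phi_equivariant, hp, ha' g]
    rw [Finset.sum_congr rfl heq, Finset.sum_const, Finset.card_univ,
      ← Nat.cast_smul_eq_nsmul k, smul_smul]
    have hcard : ((Fintype.card G : ℕ) : k) = ((Nat.card G : ℕ) : k) := by
      rw [Nat.card_eq_fintype_card]
    rw [hcard]
    have hone : (↑u⁻¹ : k) * ((Nat.card G : ℕ) : k) = 1 := by
      have hspec : (u : k) = ((Nat.card G : ℕ) : k) := hunit.unit_spec
      rw [← hspec, Units.inv_mul]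
    rw [hone, one_smul]
  have hYc := le_closure_of_beta_le hY hqinv
  have hmem : a ∈ Subring.closure ((phi X n).toRingHom ''
      {p : MvPolynomial (Idx X n) k | p ∈ (Y X n).inv ∧
        ∃ d ≤ s, p ∈ ((Y X n).grading d : Set ((Y X n).carrier))}) := by
    rw [← RingHom.map_closure]
    exact Subring.mem_map.mpr ⟨q, hYc, hphiq⟩
  refine Subring.closure_le.mpr ?_ hmem
  rintro b ⟨p', ⟨hpinv, e, hes, hpe⟩, rfl⟩
  letI := X.graded
  set b := (phi X n).toRingHom p' with hb
  have hbinv : ∀ g : G, X.action g b = b := by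
    intro g
    have : X.action g (phi X n p') = phi X n p' := by
      rw [← phi_equivariant]
      exact congrArg (phi X n) (hpinv g)
    exact this
  have hbspan : b ∈ Submodule.span k (X.degLE (n * e)) := by
    have hhom : p'.IsHomogeneous e := (MvPolynomial.mem_homogeneousSubmodule _ _).1 hpe
    exact X.aeval_homog_mem (fun x : Idx X n => x.1.2) (fun i => ⟨i.1.1, i.2.1, i.2.2⟩) hhom
  rw [← DirectSum.sum_support_decompose X.grading b]
  apply Subring.sum_mem
  intro d _
  by_cases hdle : d ≤ s * n
  · apply Subring.subset_closure
    refine ⟨?_, d, hdle, SetLike.coe_mem _⟩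
    intro g
    rw [← X.action_decompose g b d, hbinv g]
  · have hzero : (DirectSum.decompose X.grading b d : X.carrier) = 0 :=
      X.decompose_eq_zero_of_mem_span
        (lt_of_le_of_lt (by calc n * e ≤ n * s := Nat.mul_le_mul_left n hes
                              _ = s * n := Nat.mul_comm n s) (Nat.lt_of_not_le hdle)) hbspan
    rw [hzero]
    exact Subring.zero_mem _

/-- The trivial-action polynomial algebra, used to handle the degenerate case. -/
noncomputable def trivY : GradedAlgebraWithAction k G where
  carrier := MvPolynomial Unit k
  grading d := MvPolynomial.homogeneousSubmodule Unit k d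
  graded := MvPolynomial.gradedAlgebra
  action := 1
  degPres g d a ha := ha

lemma trivY_betaTop : (trivY (k := k) (G := G)).betaTop ≤ 1 := by
  exact (beta_le_of_le (mvpoly_top_le_closure (k := k) Unit)).trans_eq Nat.cast_one

end BetaAux

/-- Let `k` be a commutative ring and `G` a finite group with `|G|`
a unit of `k`.  Then for every `ℕ`-graded commutative `k`-algebra `A` with an action
of `G` by degree-preserving `k`-algebra automorphisms one has
`β(A^G) ≤ β_k(G) ⬝ β(A)`. -/
theorem betaInv_le_betaRing_mul_betaTop (k G : Type) [CommRing k] [Group G] [Finite G]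
    (hunit : IsUnit ((Nat.card G : k))) (X : GradedAlgebraWithAction k G) :
    X.betaInv ≤ betaRing k G * X.betaTop := by
  classical
  have hle_betaRing : ∀ Z : GradedAlgebraWithAction k G, Z.betaTop ≤ 1 →
      Z.betaInv ≤ betaRing k G := fun Z hZ =>
    le_trans (le_iSup (fun _ : Z.betaTop ≤ 1 => Z.betaInv) hZ)
      (le_iSup (fun W : GradedAlgebraWithAction k G => ⨆ (_ : W.betaTop ≤ 1), W.betaInv) Z)
  rcases eq_or_ne (betaRing k G) 0 with hR0 | hR0
  · -- degenerate case: `k` is the zero ring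
    have htriv : (BetaAux.trivY (k := k) (G := G)).betaInv ≤ ((0 : ℕ) : ℕ∞) := by
      have := hle_betaRing _ (BetaAux.trivY_betaTop (k := k) (G := G))
      rw [hR0] at this
      simpa using this
    have hcl := le_closure_of_beta_le htriv
    have hXinv : (MvPolynomial.X () : MvPolynomial Unit k) ∈
        (BetaAux.trivY (k := k) (G := G)).inv := fun g => rfl
    have hXmem := hcl hXinv
    have hrange : MvPolynomial.X () ∈ (MvPolynomial.C (σ := Unit) (R := k)).range := by
      refine Subring.closure_le.mpr ?_ hXmem
      rintro p ⟨-, d, hd, hp⟩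
      have hd0 : d = 0 := Nat.le_zero.mp hd
      subst hd0
      have : p.IsHomogeneous 0 := (MvPolynomial.mem_homogeneousSubmodule _ _).1 hp
      exact ⟨MvPolynomial.coeff 0 p, (homog_zero_eq_C this).symm⟩
    obtain ⟨c, hc⟩ := hrange
    have h10 : (1 : k) = 0 := by
      classical
      have h := congrArg (MvPolynomial.coeff (Finsupp.single () 1)) hc
      rw [MvPolynomial.coeff_X, MvPolynomial.coeff_C,
        if_neg (fun h0 => one_ne_zero (Finsupp.single_eq_zero.mp h0.symm))] at h
      rw [if_pos rfl] at h
      exact h.symm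
    have hk : Subsingleton k := subsingleton_iff_zero_eq_one.mp h10.symm
    have hA01 : (0 : X.carrier) = 1 := by
      rw [← (algebraMap k X.carrier).map_zero, ← (algebraMap k X.carrier).map_one]
      exact congrArg _ (Subsingleton.elim _ _)
    have hcarrier : Subsingleton X.carrier := subsingleton_iff_zero_eq_one.mp hA01
    have hfin : X.betaInv ≤ ((0 : ℕ) : ℕ∞) := by
      apply beta_le_of_le
      intro a _
      have : a = 0 := Subsingleton.elim _ _
      rw [this]
      exact Subring.zero_mem _
    rw [hR0, zero_mul]
    simpa using hfin
  rcases eq_or_ne X.betaTop ⊤ with hT | hT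
  · rw [hT, ENat.mul_top hR0]
    exact le_top
  obtain ⟨n, hn0⟩ := WithTop.ne_top_iff_exists.mp hT
  have hn : ((n : ℕ) : ℕ∞) = X.betaTop := by exact_mod_cast hn0
  rcases eq_or_ne (betaRing k G) ⊤ with hRtop | hRtop
  · rcases Nat.eq_zero_or_pos n with hn0 | hnpos
    · -- betaTop = 0
      subst hn0
      have h0 : (⊤ : Subring X.carrier) ≤ Subring.closure
          {a : X.carrier | a ∈ (⊤ : Subring X.carrier) ∧
            ∃ d ≤ 0, a ∈ (X.grading d : Set X.carrier)} :=
        le_closure_of_beta_le (le_of_eq hn.symm)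
      have hall : ∀ a : X.carrier, a ∈ X.grading 0 := by
        letI := X.graded
        have hsub : Subring.closure
            {a : X.carrier | a ∈ (⊤ : Subring X.carrier) ∧
              ∃ d ≤ 0, a ∈ (X.grading d : Set X.carrier)} ≤
            { carrier := (X.grading 0 : Set X.carrier)
              mul_mem' := fun ha hb => by
                simpa using SetLike.mul_mem_graded ha hb
              one_mem' := SetLike.one_mem_graded _
              add_mem' := fun ha hb => add_mem ha hb
              zero_mem' := zero_mem _
              neg_mem' := fun ha => neg_mem ha } := by
          apply Subring.closure_le.mpr
          rintro a ⟨-, d, hd, hmem⟩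
          have : d = 0 := Nat.le_zero.mp hd
          subst this
          exact hmem
        intro a
        exact hsub (h0 (Subring.mem_top a))
      have hfin : X.betaInv ≤ ((0 : ℕ) : ℕ∞) := by
        apply beta_le_of_le
        intro a haa
        exact Subring.subset_closure ⟨haa, 0, le_refl _, hall a⟩
      calc X.betaInv ≤ ((0 : ℕ) : ℕ∞) := hfin
        _ = 0 := by simp
        _ ≤ betaRing k G * X.betaTop := zero_le
    · have hne : X.betaTop ≠ 0 := by
        rw [← hn]
        exact_mod_cast hnpos.ne'
      rw [hRtop, ENat.top_mul hne]
      exact le_top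
  obtain ⟨s, hs0⟩ := WithTop.ne_top_iff_exists.mp hRtop
  have hs : (s : ℕ∞) = betaRing k G := by exact_mod_cast hs0
  have hYb : (BetaAux.Y X n).betaInv ≤ (s : ℕ∞) := by
    rw [hs]
    exact hle_betaRing _ (BetaAux.Y_betaTop X n)
  have hA : (⊤ : Subring X.carrier) ≤ Subring.closure
      {a : X.carrier | a ∈ (⊤ : Subring X.carrier) ∧
        ∃ d ≤ n, a ∈ (X.grading d : Set X.carrier)} :=
    le_closure_of_beta_le (le_of_eq hn.symm)
  have hkey := BetaAux.key X n hunit hA hYb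
  calc X.betaInv ≤ ((s * n : ℕ) : ℕ∞) := beta_le_of_le hkey
    _ = (s : ℕ∞) * (n : ℕ∞) := by exact_mod_cast Nat.cast_mul s n
    _ = betaRing k G * X.betaTop := by rw [hs, hn]
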